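/- Let 1 < p < ∞. If ω ∈ A_p(ℕ), then ω̃(k) := ω(|k|) belongs to A_p(ℤ), with ‖ω̃‖_{A_p(ℤ)} ≤ 4·C_{2,p}·‖ω‖_{A_p(ℕ)}, where C_{2,p} is the constant in (a+b)^{p−1} ≤ C_{2,p}(a^{p−1}+b^{p−1}) when p ≥ 2 (and C_{2,p}=1 for 1<p≤2). -/
import Mathlib


open Finset MeasureTheory
open scoped Classical

noncomputable section

/-- The symmetric interval `S_{m,N} = {k : |k - m| ≤ N}` as a finite set. -/
def Sint (m : ℤ) (N : ℕ) : Finset ℤ := Finset.Icc (m - N) (m + N)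

/-- `w(S) = Σ_{k ∈ S} w(k)`. -/
def wSum (w : ℤ → ℝ) (s : Finset ℤ) : ℝ := ∑ k ∈ s, w k

/-- Discrete weighted Morrey norm `‖x‖_{l^p_q(w,v)}`. -/
def morreyNorm (p q : ℝ) (w v : ℤ → ℝ) (x : ℤ → ℝ) : ℝ :=
  ⨆ mN : ℤ × ℕ, (wSum v (Sint mN.1 mN.2)) ^ (1/q - 1/p) *
    (∑ k ∈ Sint mN.1 mN.2, |x k| ^ p * w k) ^ (1/p)

lemma sum_natAbs_pos (f : ℕ → ℝ) (a b : ℤ) (ha : 0 ≤ a) (hab : a ≤ b) :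
    ∑ k ∈ Finset.Icc a b, f k.natAbs = ∑ j ∈ Finset.Icc a.natAbs b.natAbs, f j := by
  refine Finset.sum_nbij' (fun k => k.natAbs) (fun n => (n : ℤ)) ?_ ?_ ?_ ?_ ?_ <;>
    intros x hx <;> simp only [Finset.mem_Icc] at hx ⊢ <;> omega
lemma sum_natAbs_neg (f : ℕ → ℝ) (a b : ℤ) (hb : b ≤ 0) (hab : a ≤ b) :
    ∑ k ∈ Finset.Icc a b, f k.natAbs = ∑ j ∈ Finset.Icc b.natAbs a.natAbs, f j := by
  refine Finset.sum_nbij' (fun k => k.natAbs) (fun n => (-n : ℤ)) ?_ ?_ ?_ ?_ ?_ <;>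
    intros x hx <;> simp only [Finset.mem_Icc] at hx ⊢ <;> omega

lemma key_cover (a b : ℤ) (hab : a ≤ b) :
    ∃ c d : ℕ, c ≤ d ∧ ((Finset.Icc c d).card : ℝ) ≤ ((Finset.Icc a b).card : ℝ) ∧
      ∀ f : ℕ → ℝ, (∀ n, 0 ≤ f n) →
        ∑ k ∈ Finset.Icc a b, f k.natAbs ≤ 2 * ∑ j ∈ Finset.Icc c d, f j := by
  by_cases ha : 0 ≤ a
  · refine ⟨a.natAbs, b.natAbs, by omega, ?_, ?_⟩
    · have : (Finset.Icc a.natAbs b.natAbs).card = (Finset.Icc a b).card := by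
        rw [Nat.card_Icc, Int.card_Icc]; omega
      rw [this]
    · intro f hf
      rw [sum_natAbs_pos f a b ha hab]
      have h0 : 0 ≤ ∑ j ∈ Finset.Icc a.natAbs b.natAbs, f j :=
        Finset.sum_nonneg fun j _ => hf j
      linarith
  · by_cases hb : b ≤ 0
    · refine ⟨b.natAbs, a.natAbs, by omega, ?_, ?_⟩
      · have : (Finset.Icc b.natAbs a.natAbs).card = (Finset.Icc a b).card := by
          rw [Nat.card_Icc, Int.card_Icc]; omega
        rw [this]
      · intro f hf
        rw [sum_natAbs_neg f a b hb hab]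
        have h0 : 0 ≤ ∑ j ∈ Finset.Icc b.natAbs a.natAbs, f j :=
          Finset.sum_nonneg fun j _ => hf j
        linarith
    · push_neg at ha hb
      refine ⟨0, max a.natAbs b.natAbs, by omega, ?_, ?_⟩
      · have h1 : (Finset.Icc 0 (max a.natAbs b.natAbs)).card ≤ (Finset.Icc a b).card := by
          rw [Nat.card_Icc, Int.card_Icc]; omega
        exact_mod_cast h1
      · intro f hf
        have hsplit : Finset.Icc a b = Finset.Icc a (-1) ∪ Finset.Icc 0 b := by
          ext k; simp only [Finset.mem_Icc, Finset.mem_union]; omega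
        have hdisj : Disjoint (Finset.Icc a (-1)) (Finset.Icc 0 b) := by
          simp only [Finset.disjoint_left, Finset.mem_Icc]; omega
        rw [hsplit, Finset.sum_union hdisj]
        have e1 : ∑ k ∈ Finset.Icc a (-1), f k.natAbs
            = ∑ j ∈ Finset.Icc (1 : ℕ) a.natAbs, f j := by
          have := sum_natAbs_neg f a (-1) (by omega) (by omega)
          simpa using this
        have e2 : ∑ k ∈ Finset.Icc (0 : ℤ) b, f k.natAbs
            = ∑ j ∈ Finset.Icc (0 : ℕ) b.natAbs, f j := by
          have := sum_natAbs_pos f 0 b le_rfl (by omega)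
          simpa using this
        have s1 : ∑ j ∈ Finset.Icc (1 : ℕ) a.natAbs, f j
            ≤ ∑ j ∈ Finset.Icc 0 (max a.natAbs b.natAbs), f j := by
          apply Finset.sum_le_sum_of_subset_of_nonneg
          · intro x hx; simp only [Finset.mem_Icc] at *; omega
          · exact fun j _ _ => hf j
        have s2 : ∑ j ∈ Finset.Icc (0 : ℕ) b.natAbs, f j
            ≤ ∑ j ∈ Finset.Icc 0 (max a.natAbs b.natAbs), f j := by
          apply Finset.sum_le_sum_of_subset_of_nonneg
          · intro x hx; simp only [Finset.mem_Icc] at *; omega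
          · exact fun j _ _ => hf j
        rw [e1, e2]; linarith

/-- if `w ∈ A_p(ℕ)` with norm `≤ A`, then `k ↦ w(|k|)` is in `A_p(ℤ)`
with norm `≤ 4 C_{2,p} A`, where `C_{2,p}` satisfies `(a+b)^{p-1} ≤ C_{2,p}(a^{p-1}+b^{p-1})`. -/
theorem stmt8 (p : ℝ) (hp : 1 < p) (w : ℕ → ℝ) (hw : ∀ k, 0 < w k)
    (C2p : ℝ) (hC2p : 0 < C2p)
    (hC2 : ∀ a b : ℝ, 0 ≤ a → 0 ≤ b → (a + b) ^ (p-1) ≤ C2p * (a ^ (p-1) + b ^ (p-1)))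
    (A : ℝ)
    (hA : ∀ a b : ℕ, a ≤ b →
      (((Finset.Icc a b).card : ℝ)⁻¹ * ∑ k ∈ Finset.Icc a b, w k) *
        (((Finset.Icc a b).card : ℝ)⁻¹ *
          ∑ k ∈ Finset.Icc a b, (w k) ^ (-(p-1)⁻¹)) ^ (p-1) ≤ A) :
    ∀ a b : ℤ, a ≤ b →
      (((Finset.Icc a b).card : ℝ)⁻¹ * ∑ k ∈ Finset.Icc a b, w k.natAbs) *
        (((Finset.Icc a b).card : ℝ)⁻¹ *
          ∑ k ∈ Finset.Icc a b, (w k.natAbs) ^ (-(p-1)⁻¹)) ^ (p-1) ≤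
        4 * C2p * A := by
  intro a b hab
  have hp1 : (0:ℝ) ≤ p - 1 := by linarith
  -- A is nonneg
  have hA0 : 0 ≤ A := by
    refine le_trans ?_ (hA 0 0 le_rfl)
    apply mul_nonneg
    · exact mul_nonneg (by positivity) (Finset.sum_nonneg fun k _ => (hw k).le)
    · exact Real.rpow_nonneg
        (mul_nonneg (by positivity)
          (Finset.sum_nonneg fun k _ => Real.rpow_nonneg (hw k).le _)) _
  -- 2^(p-1) ≤ 2*C2p
  have h2p : (2:ℝ) ^ (p-1) ≤ 2 * C2p := by
    have h := hC2 1 1 zero_le_one zero_le_one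
    rw [Real.one_rpow] at h
    norm_num at h
    linarith
  obtain ⟨c, d, hcd, hcard, hsum⟩ := key_cover a b hab
  set n : ℝ := ((Finset.Icc a b).card : ℝ) with hn_def
  set m : ℝ := ((Finset.Icc c d).card : ℝ) with hm_def
  have hm : 0 < m := by
    have : (0:ℕ) < (Finset.Icc c d).card :=
      Finset.Nonempty.card_pos (Finset.nonempty_Icc.mpr hcd)
    rw [hm_def]
    exact_mod_cast this
  have hn : 0 < n := lt_of_lt_of_le hm hcard
  set S : ℝ := ∑ k ∈ Finset.Icc a b, w k.natAbs
  set T : ℝ := ∑ k ∈ Finset.Icc a b, (w k.natAbs) ^ (-(p-1)⁻¹)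
  set S' : ℝ := ∑ j ∈ Finset.Icc c d, w j with hS'_def
  set T' : ℝ := ∑ j ∈ Finset.Icc c d, (w j) ^ (-(p-1)⁻¹) with hT'_def
  have hS'0 : 0 ≤ S' := Finset.sum_nonneg fun j _ => (hw j).le
  have hT'0 : 0 ≤ T' := Finset.sum_nonneg fun j _ => Real.rpow_nonneg (hw j).le _
  have hS0 : 0 ≤ S := Finset.sum_nonneg fun k _ => (hw k.natAbs).le
  have hT0 : 0 ≤ T := Finset.sum_nonneg fun k _ => Real.rpow_nonneg (hw _).le _
  have hSle : S ≤ 2 * S' := hsum w fun k => (hw k).le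
  have hTle : T ≤ 2 * T' := hsum _ fun k => Real.rpow_nonneg (hw k).le _
  have hinv : n⁻¹ ≤ m⁻¹ := inv_anti₀ hm hcard
  have h1 : n⁻¹ * S ≤ 2 * (m⁻¹ * S') := by
    calc n⁻¹ * S ≤ n⁻¹ * (2 * S') := by
          exact mul_le_mul_of_nonneg_left hSle (by positivity)
      _ ≤ m⁻¹ * (2 * S') := mul_le_mul_of_nonneg_right hinv (by positivity)
      _ = 2 * (m⁻¹ * S') := by ring
  have h2 : n⁻¹ * T ≤ 2 * (m⁻¹ * T') := by
    calc n⁻¹ * T ≤ n⁻¹ * (2 * T') := by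
          exact mul_le_mul_of_nonneg_left hTle (by positivity)
      _ ≤ m⁻¹ * (2 * T') := mul_le_mul_of_nonneg_right hinv (by positivity)
      _ = 2 * (m⁻¹ * T') := by ring
  calc (n⁻¹ * S) * (n⁻¹ * T) ^ (p-1)
      ≤ (2 * (m⁻¹ * S')) * (2 * (m⁻¹ * T')) ^ (p-1) := by
        apply mul_le_mul h1 (Real.rpow_le_rpow (by positivity) h2 hp1)
          (Real.rpow_nonneg (by positivity) _) (by positivity)
    _ = (2 * 2 ^ (p-1)) * ((m⁻¹ * S') * (m⁻¹ * T') ^ (p-1)) := by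
        rw [Real.mul_rpow (by norm_num) (by positivity)]; ring
    _ ≤ (2 * 2 ^ (p-1)) * A := by
        apply mul_le_mul_of_nonneg_left (hA c d hcd) (by positivity)
    _ ≤ 4 * C2p * A := by
        apply mul_le_mul_of_nonneg_right _ hA0
        linarith
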